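/- Let λ₁,…,λ_n be pairwise distinct and define p_i = −Σ_{k=1}^n λ_k^{n−i} μ_k / Δ_k where Δ_k = Π_{j≠k}(λ_k − λ_j). Then the map (λ,μ) ↦ (q,p) with q_i = (−1)^i σ_i(λ) is a canonical (symplectic) transformation: the canonical Poisson brackets transform as {q_i, p_j} = δ_{ij}, {q_i, q_j} = 0, {p_i, p_j} = 0, where {λ_i, μ_j} = δ_{ij}, {λ_i, λ_j} = {μ_i, μ_j} = 0. -/

import Mathlib

open scoped BigOperators

/-- The canonical Poisson bracket on `ℝ^{2n} = (Fin n → ℝ) × (Fin n → ℝ)` with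
coordinates `(λ, μ)`:
`{F,G} = ∑ k (∂F/∂λ_k ∂G/∂μ_k − ∂F/∂μ_k ∂G/∂λ_k)`. -/
noncomputable def poissonBracket {n : ℕ}
    (F G : (Fin n → ℝ) × (Fin n → ℝ) → ℝ)
    (ξ : (Fin n → ℝ) × (Fin n → ℝ)) : ℝ :=
  ∑ k : Fin n,
    (fderiv ℝ F ξ (Pi.single k 1, 0) * fderiv ℝ G ξ (0, Pi.single k 1)
      - fderiv ℝ F ξ (0, Pi.single k 1) * fderiv ℝ G ξ (Pi.single k 1, 0))

/-- The `i`-th elementary symmetric polynomial of `l 0, …, l (n-1)`. -/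
noncomputable def esym (n : ℕ) (l : Fin n → ℝ) (i : ℕ) : ℝ :=
  ∑ t ∈ Finset.powersetCard i (Finset.univ : Finset (Fin n)), ∏ j ∈ t, l j

/-- The Viète coordinate `q_i = (−1)^i σ_i(λ)` (here `i : Fin n` stands for
`i+1 ∈ {1,…,n}`). -/
noncomputable def vieteQ (n : ℕ) (i : Fin n)
    (ξ : (Fin n → ℝ) × (Fin n → ℝ)) : ℝ :=
  (-1 : ℝ) ^ ((i : ℕ) + 1) * esym n ξ.1 ((i : ℕ) + 1)

/-- The conjugate momentum `p_i = −∑_k λ_k^{n−i} μ_k / Δ_k`, where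
`Δ_k = ∏_{j≠k} (λ_k − λ_j)` (again `i : Fin n` stands for `i+1`). -/
noncomputable def vieteP (n : ℕ) (i : Fin n)
    (ξ : (Fin n → ℝ) × (Fin n → ℝ)) : ℝ :=
  -∑ k : Fin n, (ξ.1 k) ^ (n - 1 - (i : ℕ)) * ξ.2 k /
    ∏ j ∈ Finset.univ.erase k, (ξ.1 k - ξ.1 j)


open Finset

namespace VieteAux

variable {n : ℕ}

noncomputable def eE (s : Finset (Fin n)) (i : ℕ) (l : Fin n → ℝ) : ℝ :=
  ∑ t ∈ powersetCard i s, ∏ j ∈ t, l j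

noncomputable def Del (l : Fin n → ℝ) (k : Fin n) : ℝ :=
  ∏ j ∈ Finset.univ.erase k, (l k - l j)

noncomputable def Jm (i k : Fin n) (l : Fin n → ℝ) : ℝ :=
  (-1 : ℝ) ^ ((i : ℕ) + 1) * eE (Finset.univ.erase k) (i : ℕ) l

noncomputable def Nm (j k : Fin n) (l : Fin n → ℝ) : ℝ :=
  -(l k ^ (n - 1 - (j : ℕ))) / Del l k

noncomputable def Jd (a m : Fin n) (l : Fin n → ℝ) (k : Fin n) : ℝ :=
  (-1 : ℝ) ^ ((a : ℕ) + 1) *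
    (if k ∈ Finset.univ.erase m ∧ (a : ℕ) ≠ 0
      then eE ((Finset.univ.erase m).erase k) ((a : ℕ) - 1) l else 0)

lemma Del_ne_zero {l : Fin n → ℝ} (hl : Function.Injective l) (k : Fin n) :
    Del l k ≠ 0 := by
  refine Finset.prod_ne_zero_iff.mpr fun j hj => sub_ne_zero.mpr fun h => ?_
  exact (Finset.mem_erase.mp hj).1.symm (hl h)

/-- The core Lagrange-interpolation identity `J Nᵀ = 1`. -/
lemma star {l : Fin n → ℝ} (hl : Function.Injective l) (i j : Fin n) :
    ∑ k, Jm i k l * Nm j k l = if i = j then 1 else 0 := by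
  classical
  set d : ℕ := n - 1 - (j : ℕ) with hd
  have hdeg : (Polynomial.X ^ d : Polynomial ℝ).degree < (#(univ : Finset (Fin n)) : ℕ) := by
    rw [Polynomial.degree_X_pow, Finset.card_univ, Fintype.card_fin]
    exact_mod_cast (by omega : d < n)
  have heq := Lagrange.eq_interpolate (v := l) (s := univ) hl.injOn hdeg
  have hco := congrArg (fun p => Polynomial.coeff p (n - 1 - (i : ℕ))) heq
  simp only [Lagrange.interpolate_apply] at hco
  rw [Polynomial.coeff_X_pow, Polynomial.finset_sum_coeff] at hco
  have hbasis : ∀ k : Fin n,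
      (Polynomial.C (Polynomial.eval (l k) (Polynomial.X ^ d)) *
        Lagrange.basis univ l k).coeff (n - 1 - (i : ℕ))
      = (l k) ^ d * ((Del l k)⁻¹ * ((-1) ^ (i : ℕ) * eE (univ.erase k) (i : ℕ) l)) := by
    intro k
    rw [Polynomial.coeff_C_mul, Polynomial.eval_pow, Polynomial.eval_X]
    congr 1
    have hb : Lagrange.basis univ l k
        = Polynomial.C ((Del l k)⁻¹) * ∏ r ∈ univ.erase k, (Polynomial.X - Polynomial.C (l r)) := by
      rw [Lagrange.basis]
      simp only [Lagrange.basisDivisor]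
      rw [Finset.prod_mul_distrib, map_prod (Polynomial.C : ℝ →+* Polynomial ℝ)
            (fun r => (l k - l r)⁻¹) (univ.erase k) |>.symm]
      rw [Finset.prod_inv_distrib]
      rfl
    rw [hb, Polynomial.coeff_C_mul]
    congr 1
    have hcard : (univ.erase k).card = n - 1 := by
      rw [Finset.card_erase_of_mem (Finset.mem_univ k), Finset.card_univ, Fintype.card_fin]
    have hprod : (∏ r ∈ univ.erase k, (Polynomial.X - Polynomial.C (l r)))
        = (((univ.erase k).val.map l).map fun t => Polynomial.X - Polynomial.C t).prod := by
      rw [Multiset.map_map]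
      rfl
    have hle : n - 1 - (i : ℕ) ≤ Multiset.card ((univ.erase k).val.map l) := by
      rw [Multiset.card_map]
      simp only [Finset.card_val, hcard]
      omega
    rw [hprod, Multiset.prod_X_sub_C_coeff _ hle]
    have hcard' : Multiset.card ((univ.erase k).val.map l) = n - 1 := by
      rw [Multiset.card_map]; simp [hcard]
    rw [hcard']
    have hin : (i : ℕ) < n := i.isLt
    have : n - 1 - (n - 1 - (i : ℕ)) = (i : ℕ) := by omega
    rw [this, Finset.esymm_map_val]
    rfl
  rw [Finset.sum_congr rfl (fun k _ => hbasis k)] at hco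
  have hiff : (n - 1 - (i : ℕ) = d) ↔ (i = j) := by
    rw [Fin.ext_iff]
    have := i.isLt; have := j.isLt
    omega
  have hlhs : ∀ k : Fin n, Jm i k l * Nm j k l
      = (l k) ^ d * ((Del l k)⁻¹ * ((-1) ^ (i : ℕ) * eE (univ.erase k) (i : ℕ) l)) := by
    intro k
    rw [Jm, Nm, div_eq_mul_inv, pow_succ]
    ring
  rw [Finset.sum_congr rfl fun k _ => hlhs k, ← hco]
  simp [hiff]

noncomputable def eEderiv (s : Finset (Fin n)) (i : ℕ) (l : Fin n → ℝ) :
    (Fin n → ℝ) →L[ℝ] ℝ :=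
  ∑ t ∈ powersetCard i s, ∑ j ∈ t, (∏ r ∈ t.erase j, l r) • ContinuousLinearMap.proj j

lemma hasFDerivAt_eE (s : Finset (Fin n)) (i : ℕ) (l : Fin n → ℝ) :
    HasFDerivAt (eE s i) (eEderiv s i l) l := by
  classical
  unfold eE eEderiv
  apply HasFDerivAt.fun_sum
  intro t _
  exact HasFDerivAt.finset_prod fun r _ => hasFDerivAt_apply r l

lemma eEderiv_apply (s : Finset (Fin n)) (i : ℕ) (l : Fin n → ℝ) (k : Fin n) :
    eEderiv s i l (Pi.single k 1)
      = if k ∈ s ∧ i ≠ 0 then eE (s.erase k) (i - 1) l else 0 := by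
  classical
  rw [eEderiv, ContinuousLinearMap.sum_apply]
  have hinner : ∀ t : Finset (Fin n),
      ((∑ j ∈ t, (∏ r ∈ t.erase j, l r) • ContinuousLinearMap.proj j :
          (Fin n → ℝ) →L[ℝ] ℝ))
          (Pi.single k (1:ℝ) : Fin n → ℝ)
      = if k ∈ t then ∏ r ∈ t.erase k, l r else 0 := by
    intro t
    rw [ContinuousLinearMap.sum_apply]
    simp only [ContinuousLinearMap.smul_apply, ContinuousLinearMap.proj_apply,
      smul_eq_mul, Pi.single_apply, mul_ite, mul_one, mul_zero]
    exact Finset.sum_ite_eq' t k _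
  rw [Finset.sum_congr rfl fun t _ => hinner t]
  by_cases hks : k ∈ s
  · cases i with
    | zero => simp
    | succ m =>
      rw [if_pos ⟨hks, Nat.succ_ne_zero m⟩]
      rw [Finset.sum_ite, Finset.sum_const_zero, add_zero]
      rw [eE]
      refine Finset.sum_nbij' (i := fun t => t.erase k) (j := fun u => insert k u)
        ?_ ?_ ?_ ?_ ?_
      · intro t ht
        rw [Finset.mem_filter, Finset.mem_powersetCard] at ht
        rw [Finset.mem_powersetCard]
        exact ⟨Finset.erase_subset_erase k ht.1.1,
          by rw [Finset.card_erase_of_mem ht.2, ht.1.2]⟩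
      · intro u hu
        rw [Finset.mem_powersetCard] at hu
        have hku : k ∉ u := fun h => (Finset.mem_erase.mp (hu.1 h)).1 rfl
        rw [Finset.mem_filter, Finset.mem_powersetCard]
        refine ⟨⟨Finset.insert_subset hks (hu.1.trans (Finset.erase_subset k s)), ?_⟩,
          Finset.mem_insert_self k u⟩
        rw [Finset.card_insert_of_notMem hku, hu.2]
        omega
      · intro t ht
        rw [Finset.mem_filter] at ht
        exact Finset.insert_erase ht.2
      · intro u hu
        rw [Finset.mem_powersetCard] at hu
        exact Finset.erase_insert fun h => (Finset.mem_erase.mp (hu.1 h)).1 rfl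
      · intro t _
        rfl
  · rw [if_neg (by tauto)]
    refine Finset.sum_eq_zero fun t ht => ?_
    rw [Finset.mem_powersetCard] at ht
    exact if_neg fun hk => hks (ht.1 hk)

lemma hasFDerivAt_Jm (a m : Fin n) (l : Fin n → ℝ) :
    HasFDerivAt (Jm a m)
      ((-1 : ℝ) ^ ((a : ℕ) + 1) • eEderiv (Finset.univ.erase m) (a : ℕ) l) l :=
  (hasFDerivAt_eE _ _ l).const_mul _

lemma Jm_deriv_apply (a m k : Fin n) (l : Fin n → ℝ) :
    ((-1 : ℝ) ^ ((a : ℕ) + 1) • eEderiv (Finset.univ.erase m) (a : ℕ) l) (Pi.single k 1)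
      = Jd a m l k := by
  rw [ContinuousLinearMap.smul_apply, eEderiv_apply, Jd, smul_eq_mul]

lemma Jd_symm (a m k : Fin n) (l : Fin n → ℝ) : Jd a m l k = Jd a k l m := by
  by_cases hkm : k = m
  · subst hkm; rfl
  · simp only [Jd, Finset.mem_erase, Finset.mem_univ, and_true]
    rw [Finset.erase_right_comm]
    simp [hkm, Ne.symm hkm]

lemma hasFDerivAt_Del (k : Fin n) (l : Fin n → ℝ) :
    HasFDerivAt (fun l : Fin n → ℝ => Del l k)
      (∑ j ∈ Finset.univ.erase k, (∏ r ∈ (Finset.univ.erase k).erase j, (l k - l r)) •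
        ((ContinuousLinearMap.proj k : (Fin n → ℝ) →L[ℝ] ℝ) - ContinuousLinearMap.proj j)) l := by
  unfold Del
  exact HasFDerivAt.finset_prod fun j _ =>
    (hasFDerivAt_apply k l).sub (hasFDerivAt_apply j l)

lemma differentiableAt_Nm {l : Fin n → ℝ} (j k : Fin n) (h0 : Del l k ≠ 0) :
    DifferentiableAt ℝ (Nm j k) l := by
  have h1 : DifferentiableAt ℝ (fun l : Fin n → ℝ => -(l k ^ (n - 1 - (j : ℕ)))) l :=
    ((hasFDerivAt_apply k l).differentiableAt.pow _).neg
  have h2 : DifferentiableAt ℝ (fun l : Fin n → ℝ => Del l k) l :=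
    (hasFDerivAt_Del k l).differentiableAt
  have h3 : DifferentiableAt ℝ (fun l : Fin n → ℝ =>
      -(l k ^ (n - 1 - (j : ℕ))) * (Del l k)⁻¹) l := h1.mul (h2.inv h0)
  have heq : Nm j k = fun l : Fin n → ℝ => -(l k ^ (n - 1 - (j : ℕ))) * (Del l k)⁻¹ := by
    funext l; rw [Nm, div_eq_mul_inv]
  rw [heq]
  exact h3

lemma isOpen_inj : IsOpen {l : Fin n → ℝ | Function.Injective l} := by
  have h : {l : Fin n → ℝ | Function.Injective l}
      = ⋂ p : {p : Fin n × Fin n // p.1 ≠ p.2}, {l : Fin n → ℝ | l p.1.1 ≠ l p.1.2} := by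
    ext l
    simp only [Set.mem_setOf_eq, Set.mem_iInter]
    constructor
    · intro hinj p h
      exact p.2 (hinj h)
    · intro h x y hxy
      by_contra hne
      exact h ⟨(x, y), hne⟩ hxy
  rw [h]
  exact isOpen_iInter_of_finite fun p =>
    isOpen_ne_fun (continuous_apply p.1.1) (continuous_apply p.1.2)

lemma star' {l : Fin n → ℝ} (hl : Function.Injective l) (c m : Fin n) :
    ∑ a, Nm a c l * Jm a m l = if c = m then 1 else 0 := by
  classical
  let A : Matrix (Fin n) (Fin n) ℝ := Matrix.of fun a m => Jm a m l
  let B : Matrix (Fin n) (Fin n) ℝ := Matrix.of fun m a => Nm a m l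
  have hAB : A * B = 1 := by
    ext a i
    rw [Matrix.mul_apply]
    simpa [A, B, Matrix.one_apply] using star hl a i
  have hBA := mul_eq_one_comm.mp hAB
  have h2 : (B * A) c m = (1 : Matrix (Fin n) (Fin n) ℝ) c m := by rw [hBA]
  rw [Matrix.mul_apply] at h2
  simpa [A, B, Matrix.one_apply] using h2

lemma key_identity {l : Fin n → ℝ} (hl : Function.Injective l) (a i k : Fin n) :
    ∑ m, (Jm a m l * fderiv ℝ (Nm i m) l (Pi.single k 1) + Nm i m l * Jd a m l k) = 0 := by
  classical
  have hdiffN : ∀ m : Fin n, DifferentiableAt ℝ (Nm i m) l := fun m =>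
    differentiableAt_Nm i m (Del_ne_zero hl m)
  have hF : HasFDerivAt (fun l => ∑ m, Jm a m l * Nm i m l)
      (∑ m, (Jm a m l • fderiv ℝ (Nm i m) l
        + Nm i m l • ((-1 : ℝ) ^ ((a : ℕ) + 1) • eEderiv (Finset.univ.erase m) (a : ℕ) l))) l := by
    apply HasFDerivAt.fun_sum
    intro m _
    exact (hasFDerivAt_Jm a m l).mul (hdiffN m).hasFDerivAt
  have h0 : fderiv ℝ (fun l => ∑ m, Jm a m l * Nm i m l) l = 0 := by
    have hev : (fun l => ∑ m, Jm a m l * Nm i m l)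
        =ᶠ[nhds l] fun _ => if a = i then (1 : ℝ) else 0 := by
      filter_upwards [isOpen_inj.mem_nhds hl] with x hx
      exact star hx a i
    rw [hev.fderiv_eq]
    exact fderiv_const_apply _
  have heq := hF.fderiv.symm.trans h0
  have happ := congrArg (fun L : (Fin n → ℝ) →L[ℝ] ℝ => L (Pi.single k 1)) heq
  simp only [ContinuousLinearMap.sum_apply, ContinuousLinearMap.add_apply,
    ContinuousLinearMap.smul_apply, smul_eq_mul, ContinuousLinearMap.zero_apply] at happ
  rw [← happ]
  refine Finset.sum_congr rfl fun m _ => ?_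
  congr 1
  rw [eEderiv_apply, Jd]

lemma pd_eq {l : Fin n → ℝ} (hl : Function.Injective l) (i c k : Fin n) :
    fderiv ℝ (Nm i c) l (Pi.single k 1)
      = -∑ a, ∑ m, Nm a c l * (Jd a m l k * Nm i m l) := by
  classical
  have h1 : ∀ a : Fin n, ∑ m, Jm a m l * fderiv ℝ (Nm i m) l (Pi.single k 1)
      = -∑ m, Nm i m l * Jd a m l k := by
    intro a
    have h := key_identity hl a i k
    rw [Finset.sum_add_distrib] at h
    linarith
  have step1 : fderiv ℝ (Nm i c) l (Pi.single k 1)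
      = ∑ m, (if c = m then (1 : ℝ) else 0) * fderiv ℝ (Nm i m) l (Pi.single k 1) := by
    simp [ite_mul, Finset.sum_ite_eq]
  rw [step1]
  have step2 : ∀ m : Fin n, (if c = m then (1 : ℝ) else 0) = ∑ a, Nm a c l * Jm a m l :=
    fun m => (star' hl c m).symm
  rw [Finset.sum_congr rfl fun m _ => by rw [step2 m]]
  have step3 : ∑ m, (∑ a, Nm a c l * Jm a m l) * fderiv ℝ (Nm i m) l (Pi.single k 1)
      = ∑ a, Nm a c l * ∑ m, Jm a m l * fderiv ℝ (Nm i m) l (Pi.single k 1) := by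
    simp_rw [Finset.sum_mul, Finset.mul_sum, mul_assoc]
    rw [Finset.sum_comm]
  rw [step3, Finset.sum_congr rfl fun a _ => by rw [h1 a]]
  rw [← Finset.sum_neg_distrib]
  refine Finset.sum_congr rfl fun a _ => ?_
  rw [mul_neg, neg_inj, Finset.mul_sum]
  exact Finset.sum_congr rfl fun m _ => by ring

lemma S_symm {l : Fin n → ℝ} (hl : Function.Injective l) (i j c : Fin n) :
    ∑ k, Nm j k l * fderiv ℝ (Nm i c) l (Pi.single k 1)
      = ∑ k, Nm i k l * fderiv ℝ (Nm j c) l (Pi.single k 1) := by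
  classical
  simp_rw [pd_eq hl, mul_neg, Finset.sum_neg_distrib]
  rw [neg_inj]
  simp_rw [Finset.mul_sum]
  rw [Finset.sum_comm]
  conv_rhs => rw [Finset.sum_comm]
  refine Finset.sum_congr rfl fun a _ => ?_
  rw [Finset.sum_comm]
  refine Finset.sum_congr rfl fun k _ => Finset.sum_congr rfl fun m _ => ?_
  rw [Jd_symm a m k l]
  ring

lemma hasFDerivAt_vieteQ (i : Fin n) (ξ : (Fin n → ℝ) × (Fin n → ℝ)) :
    HasFDerivAt (vieteQ n i)
      (((-1 : ℝ) ^ ((i : ℕ) + 1) • eEderiv Finset.univ ((i : ℕ) + 1) ξ.1).comp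
        (ContinuousLinearMap.fst ℝ (Fin n → ℝ) (Fin n → ℝ))) ξ := by
  have h : HasFDerivAt
      (fun l : Fin n → ℝ => (-1 : ℝ) ^ ((i : ℕ) + 1) * eE Finset.univ ((i : ℕ) + 1) l)
      ((-1 : ℝ) ^ ((i : ℕ) + 1) • eEderiv Finset.univ ((i : ℕ) + 1) ξ.1) ξ.1 :=
    (hasFDerivAt_eE _ _ _).const_mul _
  exact h.comp ξ hasFDerivAt_fst

lemma fderiv_vieteQ_mu (i k : Fin n) (ξ : (Fin n → ℝ) × (Fin n → ℝ)) :
    fderiv ℝ (vieteQ n i) ξ ((0 : Fin n → ℝ), Pi.single k 1) = 0 := by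
  rw [(hasFDerivAt_vieteQ i ξ).fderiv]
  simp

lemma fderiv_vieteQ_la (i k : Fin n) (ξ : (Fin n → ℝ) × (Fin n → ℝ)) :
    fderiv ℝ (vieteQ n i) ξ (Pi.single k 1, (0 : Fin n → ℝ)) = Jm i k ξ.1 := by
  rw [(hasFDerivAt_vieteQ i ξ).fderiv]
  simp only [ContinuousLinearMap.coe_comp', Function.comp_apply,
    ContinuousLinearMap.coe_fst', ContinuousLinearMap.smul_apply, smul_eq_mul]
  rw [eEderiv_apply, Jm]
  simp

lemma vieteP_eq (j : Fin n) : vieteP n j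
    = fun ξ : (Fin n → ℝ) × (Fin n → ℝ) => ∑ k, Nm j k ξ.1 * ξ.2 k := by
  funext ξ
  rw [vieteP, ← Finset.sum_neg_distrib]
  refine Finset.sum_congr rfl fun k _ => ?_
  rw [Nm, Del]
  ring

lemma hasFDerivAt_vieteP (j : Fin n) (ξ : (Fin n → ℝ) × (Fin n → ℝ))
    (h0 : ∀ k, Del ξ.1 k ≠ 0) :
    HasFDerivAt (vieteP n j)
      (∑ k, (Nm j k ξ.1 • ((ContinuousLinearMap.proj k).comp
            (ContinuousLinearMap.snd ℝ (Fin n → ℝ) (Fin n → ℝ)))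
        + ξ.2 k • ((fderiv ℝ (Nm j k) ξ.1).comp
            (ContinuousLinearMap.fst ℝ (Fin n → ℝ) (Fin n → ℝ))))) ξ := by
  rw [vieteP_eq]
  apply HasFDerivAt.fun_sum
  intro k _
  have h1 : HasFDerivAt (fun ξ : (Fin n → ℝ) × (Fin n → ℝ) => Nm j k ξ.1)
      ((fderiv ℝ (Nm j k) ξ.1).comp (ContinuousLinearMap.fst ℝ (Fin n → ℝ) (Fin n → ℝ))) ξ :=
    ((differentiableAt_Nm j k (h0 k)).hasFDerivAt).comp ξ hasFDerivAt_fst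
  have h2 : HasFDerivAt (fun ξ : (Fin n → ℝ) × (Fin n → ℝ) => ξ.2 k)
      ((ContinuousLinearMap.proj k).comp (ContinuousLinearMap.snd ℝ (Fin n → ℝ) (Fin n → ℝ))) ξ :=
    by have := (hasFDerivAt_apply k ξ.2).comp ξ (hasFDerivAt_snd (𝕜 := ℝ) (p := ξ)); exact this
  exact h1.mul h2

lemma fderiv_vieteP_mu (j k : Fin n) (ξ : (Fin n → ℝ) × (Fin n → ℝ))
    (h0 : ∀ k, Del ξ.1 k ≠ 0) :
    fderiv ℝ (vieteP n j) ξ ((0 : Fin n → ℝ), Pi.single k 1) = Nm j k ξ.1 := by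
  classical
  rw [(hasFDerivAt_vieteP j ξ h0).fderiv]
  simp [Pi.single_apply, Finset.sum_ite_eq']

lemma fderiv_vieteP_la (j k : Fin n) (ξ : (Fin n → ℝ) × (Fin n → ℝ))
    (h0 : ∀ k, Del ξ.1 k ≠ 0) :
    fderiv ℝ (vieteP n j) ξ (Pi.single k 1, (0 : Fin n → ℝ))
      = ∑ m, ξ.2 m * fderiv ℝ (Nm j m) ξ.1 (Pi.single k 1) := by
  rw [(hasFDerivAt_vieteP j ξ h0).fderiv]
  simp

end VieteAux

open VieteAux in
/-- the Viète coordinates `(q,p)` are Darboux coordinates: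
`{q_i,p_j} = δ_{ij}`, `{q_i,q_j} = 0`, `{p_i,p_j} = 0` with respect to the
canonical Poisson bracket `{λ_i,μ_j} = δ_{ij}` (at points where the `λ_k` are
pairwise distinct). -/
theorem viete_coordinates_are_canonical (n : ℕ)
    (ξ : (Fin n → ℝ) × (Fin n → ℝ)) (hdist : Function.Injective ξ.1) :
    (∀ i j : Fin n, poissonBracket (vieteQ n i) (vieteP n j) ξ
      = if i = j then 1 else 0) ∧
    (∀ i j : Fin n, poissonBracket (vieteQ n i) (vieteQ n j) ξ = 0) ∧
    (∀ i j : Fin n, poissonBracket (vieteP n i) (vieteP n j) ξ = 0) := by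
  classical
  have h0 : ∀ k, Del ξ.1 k ≠ 0 := Del_ne_zero hdist
  refine ⟨?_, ?_, ?_⟩
  · intro i j
    rw [poissonBracket]
    have hterm : ∀ k : Fin n,
        fderiv ℝ (vieteQ n i) ξ (Pi.single k 1, 0) * fderiv ℝ (vieteP n j) ξ (0, Pi.single k 1)
          - fderiv ℝ (vieteQ n i) ξ (0, Pi.single k 1) *
              fderiv ℝ (vieteP n j) ξ (Pi.single k 1, 0)
        = Jm i k ξ.1 * Nm j k ξ.1 := by
      intro k
      rw [fderiv_vieteQ_la, fderiv_vieteQ_mu, fderiv_vieteP_mu j k ξ h0]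
      ring
    rw [Finset.sum_congr rfl fun k _ => hterm k, star hdist i j]
  · intro i j
    rw [poissonBracket]
    refine Finset.sum_eq_zero fun k _ => ?_
    rw [fderiv_vieteQ_mu i k ξ, fderiv_vieteQ_mu j k ξ]
    ring
  · intro i j
    rw [poissonBracket]
    have hterm : ∀ k : Fin n,
        fderiv ℝ (vieteP n i) ξ (Pi.single k 1, 0) * fderiv ℝ (vieteP n j) ξ (0, Pi.single k 1)
          - fderiv ℝ (vieteP n i) ξ (0, Pi.single k 1) *
              fderiv ℝ (vieteP n j) ξ (Pi.single k 1, 0)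
        = (∑ c, ξ.2 c * fderiv ℝ (Nm i c) ξ.1 (Pi.single k 1)) * Nm j k ξ.1
          - Nm i k ξ.1 * ∑ c, ξ.2 c * fderiv ℝ (Nm j c) ξ.1 (Pi.single k 1) := by
      intro k
      rw [fderiv_vieteP_la i k ξ h0, fderiv_vieteP_mu j k ξ h0,
        fderiv_vieteP_mu i k ξ h0, fderiv_vieteP_la j k ξ h0]
    rw [Finset.sum_congr rfl fun k _ => hterm k, Finset.sum_sub_distrib]
    have hswap1 : ∑ k, (∑ c, ξ.2 c * fderiv ℝ (Nm i c) ξ.1 (Pi.single k 1)) * Nm j k ξ.1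
        = ∑ c, ξ.2 c * ∑ k, Nm j k ξ.1 * fderiv ℝ (Nm i c) ξ.1 (Pi.single k 1) := by
      simp_rw [Finset.sum_mul, Finset.mul_sum]
      rw [Finset.sum_comm]
      exact Finset.sum_congr rfl fun c _ => Finset.sum_congr rfl fun k _ => by ring
    have hswap2 : ∑ k, Nm i k ξ.1 * ∑ c, ξ.2 c * fderiv ℝ (Nm j c) ξ.1 (Pi.single k 1)
        = ∑ c, ξ.2 c * ∑ k, Nm i k ξ.1 * fderiv ℝ (Nm j c) ξ.1 (Pi.single k 1) := by
      simp_rw [Finset.mul_sum]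
      rw [Finset.sum_comm]
      exact Finset.sum_congr rfl fun c _ => Finset.sum_congr rfl fun k _ => by ring
    rw [hswap1, hswap2, ← Finset.sum_sub_distrib]
    refine Finset.sum_eq_zero fun c _ => ?_
    rw [S_symm hdist i j c]
    ring
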